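/- (Accelerated O(1/T²) rate for the Fenchel-game dynamic with OptimisticFTL and OMD⁺) Let X ⊆ E be nonempty closed convex, let f : E → ℝ be convex and L-smooth with L > 0, and let φ : E → ℝ be differentiable and 1-strongly convex. Fix C ≥ 4 and γ with 1/(CL) ≤ γ ≤ 1/(4L). With weights α_t := t and A_t := t(t+1)/2, define iterates: x_0 ∈ X, and for t = 1, …, T set x̃_t := (1/A_t)(α_t x_{t−1} + Σ_{s=1}^{t−1} α_s x_s), y_t := ∇f(x̃_t), and let x_t ∈ X minimize x ↦ γ α_t ⟨x, y_t⟩ + V_{x_{t−1}}(x) over X. Let x* minimize f over X and suppose V_{x_0}(x*) ≤ D. Then the weighted average x̄_T := (1/A_T) Σ_{t=1}^T α_t x_t satisfies f(x̄_T) − min_{x∈X} f(x) ≤ 2CLD/T². -/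

import Mathlib

set_option maxHeartbeats 1000000

open scoped BigOperators RealInnerProductSpace Topology
open Filter intervalIntegral MeasureTheory

section AuxAccel

variable {E : Type*} [NormedAddCommGroup E] [InnerProductSpace ℝ E]

private lemma aux_deriv_le_of_slope (ψ : ℝ → ℝ) (d b : ℝ) (hψ : HasDerivAt ψ d 0)
    (h : ∀ θ : ℝ, 0 < θ → θ ≤ 1 → ψ θ - ψ 0 ≤ θ * b) : d ≤ b := by
  have h1 : Tendsto (slope ψ 0) (𝓝[>] 0) (𝓝 d) :=
    (hasDerivAt_iff_tendsto_slope.mp hψ).mono_left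
      (nhdsWithin_mono _ (fun x hx => ne_of_gt hx))
  refine le_of_tendsto h1 ?_
  filter_upwards [Ioc_mem_nhdsGT_of_mem (Set.left_mem_Ico.mpr one_pos)] with θ hθ
  have hθ0 : (0:ℝ) < θ := hθ.1
  have : slope ψ 0 θ = (ψ θ - ψ 0) / θ := by rw [slope_def_field]; ring_nf
  rw [this, div_le_iff₀ hθ0]
  calc ψ θ - ψ 0 ≤ θ * b := h θ hθ0 hθ.2
  _ = b * θ := by ring

private lemma aux_line_hasDerivAt (h : E → ℝ) (g : E) (p v : E) (θ0 : ℝ)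
    (hd : HasFDerivAt h (innerSL ℝ g) (p + θ0 • v)) :
    HasDerivAt (fun θ : ℝ => h (p + θ • v)) ⟪g, v⟫ θ0 := by
  have hline : HasDerivAt (fun θ : ℝ => p + θ • v) v θ0 := by
    simpa using ((hasDerivAt_id θ0).smul_const v).const_add p
  have := hd.comp_hasDerivAt (x := θ0) hline
  exact this

private lemma aux_convex_grad_ineq (f : E → ℝ) (hf : ConvexOn ℝ Set.univ f)
    (g : E) (p : E) (hd : HasFDerivAt f (innerSL ℝ g) p) (z : E) :
    ⟪g, z - p⟫ ≤ f z - f p := by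
  refine aux_deriv_le_of_slope _ _ _
    (aux_line_hasDerivAt f g p (z - p) 0 (by simpa using hd)) ?_
  intro θ hθ0 hθ1
  have key : f (θ • z + (1 - θ) • p) ≤ θ • f z + (1 - θ) • f p :=
    hf.2 (Set.mem_univ z) (Set.mem_univ p) hθ0.le (by linarith) (by ring)
  have hpt : θ • z + (1 - θ) • p = p + θ • (z - p) := by
    simp [smul_sub, sub_smul]; abel
  rw [hpt] at key
  simp only [smul_eq_mul] at key
  simp only [zero_smul, add_zero]
  nlinarith [key]

private lemma aux_first_order_opt (h : E → ℝ) (g : E) (p u : E)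
    (hd : HasFDerivAt h (innerSL ℝ g) p)
    (hm : ∀ θ : ℝ, 0 < θ → θ ≤ 1 → h p ≤ h (p + θ • (u - p))) :
    0 ≤ ⟪g, u - p⟫ := by
  have := aux_deriv_le_of_slope (fun θ => -(h (p + θ • (u - p)))) (-⟪g, u - p⟫) 0
    (by exact (aux_line_hasDerivAt h g p (u - p) 0 (by simpa using hd)).neg)
    (by intro θ hθ0 hθ1
        have := hm θ hθ0 hθ1
        simp only [zero_smul, add_zero]
        nlinarith)
  linarith

private lemma aux_descent_lemma (f : E → ℝ) (gf : E → E)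
    (hgf : ∀ x : E, HasFDerivAt f (innerSL ℝ (gf x)) x)
    (L : ℝ) (hL : 0 ≤ L) (hsmooth : ∀ x z : E, ‖gf x - gf z‖ ≤ L * ‖x - z‖)
    (p z : E) : f z ≤ f p + ⟪gf p, z - p⟫ + L/2 * ‖z - p‖^2 := by
  set v := z - p with hv
  have hcont : Continuous gf := by
    have : LipschitzWith (Real.toNNReal L) gf := by
      apply LipschitzWith.of_dist_le_mul
      intro a b
      rw [dist_eq_norm, dist_eq_norm, Real.coe_toNNReal L hL]
      exact hsmooth a b
    exact this.continuous
  have hψ : ∀ θ ∈ Set.uIcc (0:ℝ) 1,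
      HasDerivAt (fun θ : ℝ => f (p + θ • v)) (⟪gf (p + θ • v), v⟫) θ :=
    fun θ _ => aux_line_hasDerivAt f _ p v θ (hgf _)
  have hcd : Continuous (fun θ : ℝ => ⟪gf (p + θ • v), v⟫) :=
    (hcont.comp (continuous_const.add (continuous_id.smul continuous_const))).inner
      continuous_const
  have hint : IntervalIntegrable (fun θ : ℝ => ⟪gf (p + θ • v), v⟫) volume 0 1 :=
    hcd.intervalIntegrable 0 1
  have heq : ∫ θ in (0:ℝ)..1, ⟪gf (p + θ • v), v⟫ = f (p + (1:ℝ) • v) - f (p + (0:ℝ) • v) :=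
    integral_eq_sub_of_hasDerivAt hψ hint
  have hrhsint : IntervalIntegrable (fun θ : ℝ => ⟪gf p, v⟫ + L * ‖v‖^2 * θ) volume 0 1 :=
    (continuous_const.add (continuous_const.mul continuous_id)).intervalIntegrable 0 1
  have hbound : ∫ θ in (0:ℝ)..1, ⟪gf (p + θ • v), v⟫
      ≤ ∫ θ in (0:ℝ)..1, (⟪gf p, v⟫ + L * ‖v‖^2 * θ) := by
    apply integral_mono_on (by norm_num) hint hrhsint
    intro θ hθ
    have h1 : ⟪gf (p + θ • v) - gf p, v⟫ ≤ L * ‖v‖^2 * θ := by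
      calc ⟪gf (p + θ • v) - gf p, v⟫ ≤ ‖gf (p + θ • v) - gf p‖ * ‖v‖ :=
            real_inner_le_norm _ _
        _ ≤ (L * ‖p + θ • v - p‖) * ‖v‖ := by
            apply mul_le_mul_of_nonneg_right _ (norm_nonneg v)
            exact hsmooth _ _
        _ = L * ‖v‖^2 * θ := by
            simp [norm_smul, abs_of_nonneg hθ.1]
            ring
    have h2 : ⟪gf (p + θ • v), v⟫ = ⟪gf p, v⟫ + ⟪gf (p + θ • v) - gf p, v⟫ := by
      rw [inner_sub_left]; ring
    linarith
  have hval : ∫ θ in (0:ℝ)..1, (⟪gf p, v⟫ + L * ‖v‖^2 * θ) = ⟪gf p, v⟫ + L/2 * ‖v‖^2 := by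
    have hcont2 : IntervalIntegrable (fun θ : ℝ => L * ‖v‖^2 * θ) volume 0 1 := by
      apply Continuous.intervalIntegrable; continuity
    rw [integral_add intervalIntegrable_const hcont2, intervalIntegral.integral_const_mul, integral_id]
    simp
    ring
  have : f (p + (1:ℝ) • v) - f (p + (0:ℝ) • v) ≤ ⟪gf p, v⟫ + L/2 * ‖v‖^2 := by
    rw [← heq, ← hval]; exact hbound
  simp only [one_smul, zero_smul, add_zero, hv] at this
  have hz : p + (z - p) = z := by abel
  rw [hz] at this
  linarith

private lemma aux_sc_bregman (φ : E → ℝ) (gφ : E → E)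
    (hgφ : ∀ x : E, HasFDerivAt φ (innerSL ℝ (gφ x)) x)
    (hφsc : StrongConvexOn Set.univ 1 φ) (c z : E) :
    (1:ℝ)/2 * ‖z - c‖^2 ≤ φ z - ⟪gφ c, z - c⟫ - φ c := by
  set ψ : E → ℝ := fun w => φ w - 1/(2:ℝ) * ‖w‖^2 with hψdef
  have hψconv : ConvexOn ℝ Set.univ ψ := by
    have := strongConvexOn_iff_convex.mp hφsc
    simpa [hψdef] using this
  have hderiv : HasFDerivAt ψ (innerSL ℝ (gφ c - c)) c := by
    have hn : HasFDerivAt (fun w : E => 1/(2:ℝ) * ⟪w, w⟫) (innerSL ℝ c) c := by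
      have h1 := ((hasFDerivAt_id c).inner ℝ (hasFDerivAt_id c)).const_mul (1/(2:ℝ))
      refine h1.congr_fderiv ?_
      ext w
      simp [fderivInnerCLM_apply, real_inner_comm]
      ring
    have h2 : HasFDerivAt (fun w : E => 1/(2:ℝ) * ‖w‖^2) (innerSL ℝ c) c := by
      simpa only [real_inner_self_eq_norm_sq] using hn
    have h3 := (hgφ c).sub h2
    rw [map_sub] at *
    exact h3
  have := aux_convex_grad_ineq ψ hψconv (gφ c - c) c hderiv z
  simp only [hψdef, inner_sub_left] at this ⊢
  have hexp : ‖z - c‖^2 = ‖z‖^2 - 2*⟪c, z⟫ + ‖c‖^2 := by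
    rw [← real_inner_self_eq_norm_sq, ← real_inner_self_eq_norm_sq, ← real_inner_self_eq_norm_sq,
      inner_sub_sub_self]
    ring_nf
    rw [real_inner_comm z c]
    ring
  have hic : ⟪c, z - c⟫ = ⟪c, z⟫ - ⟪c, c⟫ := by rw [inner_sub_right]
  rw [hic] at this
  rw [hexp]
  have hcc : ⟪c, c⟫ = ‖c‖^2 := real_inner_self_eq_norm_sq c
  linarith [this]

/-- Per-step inequality for the accelerated rate. -/
private lemma aux_step_key
    (X : Set E) (hXconv : Convex ℝ X)
    (f : E → ℝ) (hfconv : ConvexOn ℝ Set.univ f)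
    (gf : E → E) (hgf : ∀ x : E, HasFDerivAt f (innerSL ℝ (gf x)) x)
    (L : ℝ) (hL : 0 < L)
    (hsmooth : ∀ x z : E, ‖gf x - gf z‖ ≤ L * ‖x - z‖)
    (φ : E → ℝ) (gφ : E → E) (hgφ : ∀ x : E, HasFDerivAt φ (innerSL ℝ (gφ x)) x)
    (hφsc : StrongConvexOn Set.univ 1 φ)
    (γ : ℝ) (hγpos : 0 < γ) (hγ2 : γ ≤ 1/(4*L))
    (xstar : E) (hxstar : xstar ∈ X)
    (σ : ℝ) (hσ0 : 0 ≤ σ)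
    (c w xt1 S' : E) (hwX : w ∈ X)
    (hS0 : σ = 0 → S' = 0)
    (hxtt : xt1 = (2/((σ+1)*((σ+1)+1))) • ((σ+1) • c + S'))
    (hmin' : ∀ u ∈ X,
      γ * (σ+1) * ⟪w, gf xt1⟫ + (φ w - ⟪gφ c, w - c⟫ - φ c)
        ≤ γ * (σ+1) * ⟪u, gf xt1⟫ + (φ u - ⟪gφ c, u - c⟫ - φ c)) :
    γ * (((σ+1)*((σ+1)+1)/2) * f ((2/((σ+1)*((σ+1)+1))) • (S' + (σ+1) • w))
        - (σ*(σ+1)/2) * f ((2/(σ*(σ+1))) • S')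
        - (σ+1) * f xstar)
      ≤ (φ xstar - ⟪gφ c, xstar - c⟫ - φ c)
        - (φ xstar - ⟪gφ w, xstar - w⟫ - φ w) := by
  have h1pos : (0:ℝ) < σ + 1 := by linarith
  have h2pos : (0:ℝ) < (σ+1) + 1 := by linarith
  have hne1 : σ + 1 ≠ 0 := ne_of_gt h1pos
  have hne2 : (σ+1) + 1 ≠ 0 := ne_of_gt h2pos
  set v : E := gf xt1 with hv
  set At : ℝ := (σ+1)*((σ+1)+1)/2 with hAt
  set At1 : ℝ := σ*(σ+1)/2 with hAt1
  set κ : ℝ := (2/((σ+1)*((σ+1)+1))) * (σ+1) with hκ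
  set ρ : ℝ := L * ((σ+1)/((σ+1)+1)) with hρ
  set bt : E := (2/((σ+1)*((σ+1)+1))) • (S' + (σ+1) • w) with hbt
  set bt' : E := (2/(σ*(σ+1))) • S' with hbt'
  have hAtpos : 0 < At := by rw [hAt]; positivity
  have hAt1nn : 0 ≤ At1 := by rw [hAt1]; positivity
  have hAtx : At • xt1 = (σ+1) • c + S' := by
    rw [hxtt, smul_smul]
    have : At * (2/((σ+1)*((σ+1)+1))) = 1 := by rw [hAt]; field_simp
    rw [this, one_smul]
  have hAt1b : At1 • bt' = S' := by
    rcases eq_or_lt_of_le hσ0 with h|h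
    · rw [hbt', hS0 h.symm, smul_zero, smul_zero]
    · rw [hbt', smul_smul]
      have hσne : σ ≠ 0 := ne_of_gt h
      have : At1 * (2/(σ*(σ+1))) = 1 := by rw [hAt1]; field_simp
      rw [this, one_smul]
  have hbar : bt - xt1 = κ • (w - c) := by
    rw [hbt, hxtt, hκ]
    module
  have hvec : At1 • (bt' - xt1) = (σ+1) • xt1 - (σ+1) • c := by
    have hS' : S' = At • xt1 - (σ+1) • c := by rw [hAtx]; abel
    rw [smul_sub, hAt1b, hS', hAt, hAt1]
    module
  have hbm : ⟪v, bt - xt1⟫ = κ * ⟪v, w - c⟫ := by rw [hbar, real_inner_smul_right]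
  have hbn : ‖bt - xt1‖^2 = κ^2 * ‖w - c‖^2 := by
    rw [hbar, norm_smul, mul_pow, Real.norm_eq_abs, sq_abs]
  have hq : At1 * ⟪v, bt' - xt1⟫ = (σ+1) * ⟪v, xt1 - c⟫ := by
    rw [← real_inner_smul_right, hvec, ← smul_sub, real_inner_smul_right]
  have h1 := aux_descent_lemma f gf hgf L hL.le hsmooth xt1 bt
  rw [hbm, hbn] at h1
  have h2 := aux_convex_grad_ineq f hfconv v xt1 (hgf xt1) bt'
  have h3 := aux_convex_grad_ineq f hfconv v xt1 (hgf xt1) xstar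
  have hd1 : At * f bt ≤ At * f xt1 + (σ+1) * ⟪v, w - c⟫ + ρ * ‖w - c‖^2 := by
    have hmul := mul_le_mul_of_nonneg_left h1 hAtpos.le
    have e1 : At * κ = σ + 1 := by rw [hAt, hκ]; field_simp
    have e2 : At * (L/2) * κ^2 = ρ := by rw [hAt, hκ, hρ]; field_simp
    have e3 : At * (f xt1 + κ * ⟪v, w - c⟫ + L/2*(κ^2*‖w - c‖^2))
        = At * f xt1 + (At * κ) * ⟪v, w - c⟫ + (At * (L/2) * κ^2) * ‖w - c‖^2 := by ring
    rw [e3, e1, e2] at hmul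
    exact hmul
  have hd2 : (σ+1) * ⟪v, xt1 - c⟫ ≤ At1 * f bt' - At1 * f xt1 := by
    have hmul := mul_le_mul_of_nonneg_left h2 hAt1nn
    rw [← hq]; linarith [hmul]
  have hd3 : (σ+1) * ⟪v, xstar - xt1⟫ ≤ (σ+1) * f xstar - (σ+1) * f xt1 := by
    have hmul := mul_le_mul_of_nonneg_left h3 h1pos.le
    linarith [hmul]
  have hhd : HasFDerivAt
      (fun u : E => γ * (σ+1) * ⟪u, v⟫ + (φ u - ⟪gφ c, u - c⟫ - φ c))
      (innerSL ℝ ((γ * (σ+1)) • v + (gφ w - gφ c))) w := by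
    have e1 : (fun u : E => γ * (σ+1) * ⟪u, v⟫)
        = fun u => γ * (σ+1) * (innerSL ℝ v) u := by
      funext u; simp [real_inner_comm]
    have hA : HasFDerivAt (fun u : E => γ * (σ+1) * ⟪u, v⟫)
        ((γ * (σ+1)) • innerSL ℝ v) w := by
      rw [e1]; exact ((innerSL ℝ v).hasFDerivAt).const_mul _
    have hB : HasFDerivAt (fun u : E => ⟪gφ c, u - c⟫) (innerSL ℝ (gφ c)) w := by
      have e2 : (fun u : E => ⟪gφ c, u - c⟫)
          = fun u => (innerSL ℝ (gφ c)) u - ⟪gφ c, c⟫ := by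
        funext u; simp [inner_sub_right]
      rw [e2]; exact ((innerSL ℝ (gφ c)).hasFDerivAt).sub_const _
    have hC := (((hgφ w).sub hB).sub_const (φ c))
    have hD := hA.add hC
    refine hD.congr_fderiv ?_
    simp [map_add, map_sub, _root_.map_smul]
  have hfo : 0 ≤ ⟪(γ * (σ+1)) • v + (gφ w - gφ c), xstar - w⟫ := by
    apply aux_first_order_opt _ _ w xstar hhd
    intro θ hθ0 hθ1
    have hptX : w + θ • (xstar - w) ∈ X := by
      have hmem := hXconv hwX hxstar (by linarith : (0:ℝ) ≤ 1 - θ) hθ0.le (by ring)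
      have : w + θ • (xstar - w) = (1-θ) • w + θ • xstar := by module
      rw [this]; exact hmem
    exact hmin' _ hptX
  have hfo' : 0 ≤ γ * (σ+1) * ⟪v, xstar - w⟫ + ⟪gφ w - gφ c, xstar - w⟫ := by
    rw [inner_add_left, real_inner_smul_left] at hfo
    linarith [hfo]
  have h5 : ⟪gφ w - gφ c, xstar - w⟫
      = (φ xstar - ⟪gφ c, xstar - c⟫ - φ c)
        - (φ xstar - ⟪gφ w, xstar - w⟫ - φ w)
        - (φ w - ⟪gφ c, w - c⟫ - φ c) := by
    simp only [inner_sub_left, inner_sub_right]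
    ring
  have h6 := aux_sc_bregman φ gφ hgφ hφsc c w
  have h7 : ⟪v, xstar - w⟫ + (⟪v, w - c⟫ - ⟪v, xt1 - c⟫ - ⟪v, xstar - xt1⟫) = 0 := by
    simp only [inner_sub_right]; ring
  have h7' : γ * (σ+1) * (⟪v, xstar - w⟫
      + (⟪v, w - c⟫ - ⟪v, xt1 - c⟫ - ⟪v, xstar - xt1⟫)) = 0 := by
    rw [h7, mul_zero]
  have hn : (0:ℝ) ≤ ‖w - c‖^2 := sq_nonneg _
  have hρb : γ * ρ * ‖w - c‖^2 ≤ 1/2 * ‖w - c‖^2 := by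
    apply mul_le_mul_of_nonneg_right _ hn
    have hfrac : (σ+1)/((σ+1)+1) ≤ 1 := by
      rw [div_le_one h2pos]; linarith
    have h4L : (0:ℝ) < 4*L := by linarith
    have hγL : γ * (4*L) ≤ 1 := (le_div_iff₀ h4L).mp hγ2
    have hdnn : 0 ≤ (σ+1)/((σ+1)+1) := by positivity
    rw [hρ]
    nlinarith [mul_nonneg (mul_nonneg hγpos.le hL.le) (sub_nonneg.mpr hfrac), hγL,
      mul_nonneg (mul_nonneg hγpos.le hL.le) hdnn]
  have F1 := mul_le_mul_of_nonneg_left hd1 hγpos.le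
  have F2 := mul_le_mul_of_nonneg_left hd2 hγpos.le
  have F3 := mul_le_mul_of_nonneg_left hd3 hγpos.le
  have hAtc : γ * At * f xt1 - γ * At1 * f xt1 - γ * (σ+1) * f xt1 = 0 := by
    rw [hAt, hAt1]; ring
  linarith [F1, F2, F3, hfo', h5, h6, h7', hρb, hAtc]

end AuxAccel

/-- Accelerated `O(1/T²)` rate for the Fenchel-game dynamic with OptimisticFTL and OMD⁺.
The Bregman divergence `V_c (z) = φ z - ⟪∇φ c, z - c⟫ - φ c` is written out using the
gradient `gφ` of `φ`, and `y_t := ∇f (x̃_t)` is written out using the gradient `gf` of `f`. -/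
theorem accelerated_rate_optimisticFTL_omd
    {E : Type*} [NormedAddCommGroup E] [InnerProductSpace ℝ E]
    (X : Set E) (hXne : X.Nonempty) (hXcl : IsClosed X) (hXconv : Convex ℝ X)
    (f : E → ℝ) (hfconv : ConvexOn ℝ Set.univ f)
    (gf : E → E) (hgf : ∀ x : E, HasFDerivAt f (innerSL ℝ (gf x)) x)
    (L : ℝ) (hL : 0 < L)
    (hsmooth : ∀ x z : E, ‖gf x - gf z‖ ≤ L * ‖x - z‖)
    (φ : E → ℝ) (gφ : E → E) (hgφ : ∀ x : E, HasFDerivAt φ (innerSL ℝ (gφ x)) x)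
    (hφsc : StrongConvexOn Set.univ 1 φ)
    (C γ : ℝ) (hC : 4 ≤ C) (hγ1 : 1/(C*L) ≤ γ) (hγ2 : γ ≤ 1/(4*L))
    (T : ℕ) (hT : 1 ≤ T)
    (x : ℕ → E) (hx0 : x 0 ∈ X)
    (xt : ℕ → E)
    -- `x̃_t := (1/A_t) (α_t x_{t-1} + Σ_{s<t} α_s x_s)` with `α_t = t`, `A_t = t(t+1)/2`
    (hxt : ∀ t ∈ Finset.Icc 1 T,
      xt t = (2/((t:ℝ)*((t:ℝ)+1))) •
        ((t:ℝ) • x (t-1) + ∑ s ∈ Finset.Icc 1 (t-1), (s:ℝ) • x s))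
    -- `x_t` minimizes `x ↦ γ α_t ⟨x, y_t⟩ + V_{x_{t-1}} (x)` over `X`, with `y_t = ∇f (x̃_t)`
    (hmin : ∀ t ∈ Finset.Icc 1 T, x t ∈ X ∧ ∀ u ∈ X,
      γ * (t:ℝ) * ⟪x t, gf (xt t)⟫
          + (φ (x t) - ⟪gφ (x (t-1)), x t - x (t-1)⟫ - φ (x (t-1)))
        ≤ γ * (t:ℝ) * ⟪u, gf (xt t)⟫
          + (φ u - ⟪gφ (x (t-1)), u - x (t-1)⟫ - φ (x (t-1))))
    (xstar : E) (hxstar : xstar ∈ X) (hxstarmin : ∀ u ∈ X, f xstar ≤ f u)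
    (D : ℝ) (hD : φ xstar - ⟪gφ (x 0), xstar - x 0⟫ - φ (x 0) ≤ D) :
    f ((2/((T:ℝ)*((T:ℝ)+1))) • ∑ t ∈ Finset.Icc 1 T, (t:ℝ) • x t) - f xstar
      ≤ 2*C*L*D / (T:ℝ)^2 := by
  have hCpos : (0:ℝ) < C := by linarith
  have hγpos : 0 < γ := lt_of_lt_of_le (by positivity) hγ1
  set Sf : ℕ → E := fun n => ∑ s ∈ Finset.Icc 1 n, (s:ℝ) • x s with hSf
  set B : ℕ → ℝ := fun n => ((n:ℝ)*((n:ℝ)+1)/2) * f ((2/((n:ℝ)*((n:ℝ)+1))) • Sf n) with hB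
  set V : ℕ → ℝ := fun n => φ xstar - ⟪gφ (x n), xstar - x n⟫ - φ (x n) with hV
  -- per-step inequality
  have key : ∀ t ∈ Finset.Icc 1 T, γ * (B t - B (t-1) - (t:ℝ) * f xstar) ≤ V (t-1) - V t := by
    intro t ht
    obtain ⟨ht1, ht2⟩ := Finset.mem_Icc.mp ht
    obtain ⟨t', rfl⟩ : ∃ t', t = t' + 1 := ⟨t - 1, by omega⟩
    simp only [Nat.add_sub_cancel]
    have hcast : ((t' + 1 : ℕ) : ℝ) = (t':ℝ) + 1 := by push_cast; ring
    have hxtt := hxt (t'+1) ht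
    simp only [Nat.add_sub_cancel] at hxtt
    rw [hcast] at hxtt
    have hmt := hmin (t'+1) ht
    simp only [Nat.add_sub_cancel] at hmt
    have hSsucc : Sf (t'+1) = Sf t' + (((t':ℝ)+1)) • x (t'+1) := by
      simp only [hSf]
      rw [Finset.sum_Icc_succ_top (by omega : 1 ≤ t'+1), hcast]
    have step := aux_step_key X hXconv f hfconv gf hgf L hL hsmooth φ gφ hgφ hφsc
      γ hγpos hγ2 xstar hxstar ((t':ℝ)) (Nat.cast_nonneg t')
      (x t') (x (t'+1)) (xt (t'+1)) (Sf t') hmt.1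
      ?_ ?_ ?_
    · -- convert step's conclusion to the goal
      simp only [hB, hV]
      rw [hSsucc, hcast]
      exact step
    · -- σ = 0 → Sf 0 = 0
      intro h
      have ht0 : t' = 0 := by exact_mod_cast h
      rw [ht0]
      simp [hSf]
    · -- xt relation
      exact hxtt
    · -- minimality
      intro u hu
      have := hmt.2 u hu
      rw [hcast] at this
      exact this
  -- telescoping
  have htel : ∀ (g : ℕ → ℝ) (n : ℕ), ∑ t ∈ Finset.Icc 1 n, (g t - g (t-1)) = g n - g 0 := by
    intro g n
    induction n with
    | zero => simp
    | succ n ih =>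
        rw [Finset.sum_Icc_succ_top (by omega : 1 ≤ n+1)]
        simp only [Nat.add_sub_cancel]
        rw [ih]; ring
  have hgauss : ∀ n : ℕ, ∑ t ∈ Finset.Icc 1 n, (t:ℝ) = (n:ℝ)*((n:ℝ)+1)/2 := by
    intro n
    induction n with
    | zero => simp
    | succ n ih =>
        rw [Finset.sum_Icc_succ_top (by omega : 1 ≤ n+1), ih]
        push_cast; ring
  have hsum := Finset.sum_le_sum key
  have hLHS : ∑ t ∈ Finset.Icc 1 T, γ * (B t - B (t-1) - (t:ℝ) * f xstar)
      = γ * ((B T - B 0) - ((T:ℝ)*((T:ℝ)+1)/2) * f xstar) := by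
    rw [← Finset.mul_sum]
    congr 1
    have e : ∀ t ∈ Finset.Icc 1 T, B t - B (t-1) - (t:ℝ) * f xstar
        = (B t - B (t-1)) - (t:ℝ) * f xstar := fun t _ => by ring
    rw [Finset.sum_congr rfl e, Finset.sum_sub_distrib, htel B T, ← Finset.sum_mul, hgauss T]
  have hRHS : ∑ t ∈ Finset.Icc 1 T, (V (t-1) - V t) = V 0 - V T := by
    have e : ∀ t ∈ Finset.Icc 1 T, V (t-1) - V t
        = ((fun n => -V n) t - (fun n => -V n) (t-1)) := fun t _ => by simp; ring
    rw [Finset.sum_congr rfl e, htel (fun n => -V n) T]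
    ring
  rw [hLHS, hRHS] at hsum
  have hB0 : B 0 = 0 := by simp [hB]
  have hVT : 0 ≤ V T := by
    simp only [hV]
    have h := aux_sc_bregman φ gφ hgφ hφsc (x T) xstar
    have : (0:ℝ) ≤ 1/2 * ‖xstar - x T‖^2 := by positivity
    linarith
  have hV0 : V 0 ≤ D := by simp only [hV]; exact hD
  have hV0nn : 0 ≤ V 0 := by
    simp only [hV]
    have h := aux_sc_bregman φ gφ hgφ hφsc (x 0) xstar
    have : (0:ℝ) ≤ 1/2 * ‖xstar - x 0‖^2 := by positivity
    linarith
  have hDnn : 0 ≤ D := le_trans hV0nn hV0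
  have hmain : γ * (B T - ((T:ℝ)*((T:ℝ)+1)/2) * f xstar) ≤ D := by
    rw [hB0] at hsum
    have h' : γ * (B T - 0 - ((T:ℝ)*((T:ℝ)+1)/2) * f xstar)
        = γ * (B T - ((T:ℝ)*((T:ℝ)+1)/2) * f xstar) := by ring
    rw [h'] at hsum
    have hVD : V 0 - V T ≤ D := by linarith [hVT, hV0]
    exact le_trans hsum hVD
  have hCL : (0:ℝ) < C * L := by positivity
  have hγCL : 1 ≤ γ * (C*L) := by
    rw [div_le_iff₀ hCL] at hγ1
    linarith
  have hfin : B T - ((T:ℝ)*((T:ℝ)+1)/2) * f xstar ≤ C*L*D := by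
    nlinarith [hmain, hγpos, mul_le_mul_of_nonneg_right hγCL hDnn]
  -- final arithmetic
  have hT1 : (1:ℝ) ≤ (T:ℝ) := by exact_mod_cast hT
  have hTpos : (0:ℝ) < (T:ℝ) := by linarith
  have hBTeq : B T = ((T:ℝ)*((T:ℝ)+1)/2) * f ((2/((T:ℝ)*((T:ℝ)+1))) • Sf T) := by
    simp only [hB]
  have hgoalS : (∑ t ∈ Finset.Icc 1 T, (t:ℝ) • x t) = Sf T := by simp [hSf]
  rw [hgoalS]
  rw [hBTeq] at hfin
  set FT := f ((2/((T:ℝ)*((T:ℝ)+1))) • Sf T) with hFT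
  have hCLD : (0:ℝ) ≤ C*L*D := by positivity
  rcases le_or_gt (FT - f xstar) 0 with h|h
  · have : (0:ℝ) ≤ 2*C*L*D / (T:ℝ)^2 := by positivity
    linarith
  · rw [le_div_iff₀ (by positivity : (0:ℝ) < (T:ℝ)^2)]
    have h1 : (FT - f xstar)*(T:ℝ)^2 ≤ (FT - f xstar)*((T:ℝ)*((T:ℝ)+1)) := by
      apply mul_le_mul_of_nonneg_left _ h.le
      nlinarith [hT1]
    nlinarith [hfin, h1]
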